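/- Let n ≥ 2 and give L ⊆ ℝⁿ the subspace topology. The map g: ℝⁿ → L × ℝ defined by g(x) = ((x₁ − t(x)/2, x₂ + t(x)/2, x₃ − t(x)/2, …, x_n + (−1)ⁿ·t(x)/2), t(x)/2) (i.e. the k-th coordinate of the first component is x_k + (−1)ᵏ·t(x)/2) is a well-defined homeomorphism from ℝⁿ onto L × ℝ, and it satisfies g(M) = L × (−∞,0) and g(S) = L × (0,+∞). -/
import Mathlib


/-- `t(x)`: the minimum of `x k - x k'` over paper-odd indices `k` and paper-even
indices `k'` (indices in the paper run over `{1,…,n}`; here `k : Fin n` corresponds to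
the paper index `k.val + 1`). -/
noncomputable def tmin (n : ℕ) (x : Fin n → ℝ) : ℝ :=
  sInf {d : ℝ | ∃ k k' : Fin n, Odd (k.val + 1) ∧ Even (k'.val + 1) ∧ d = x k - x k'}

/-- Mixed points. -/
def Mset (n : ℕ) : Set (Fin n → ℝ) := {x | tmin n x < 0}
/-- Split points. -/
def Sset (n : ℕ) : Set (Fin n → ℝ) := {x | 0 < tmin n x}
/-- Level points. -/
def Lset (n : ℕ) : Set (Fin n → ℝ) := {x | tmin n x = 0}

/-- The map `g(x) = ((x_k + (−1)^k t(x)/2)_k , t(x)/2)` is a well-defined homeomorphism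
`ℝⁿ ≃ L × ℝ` carrying `M` onto `L × (−∞,0)` and `S` onto `L × (0,∞)`. -/
def Pset (n : ℕ) : Finset (Fin n × Fin n) :=
  Finset.univ.filter (fun p => Odd (p.1.val + 1) ∧ Even (p.2.val + 1))

lemma Pne (n : ℕ) (hn : 2 ≤ n) : (Pset n).Nonempty := by
  refine ⟨(⟨0, by omega⟩, ⟨1, by omega⟩), ?_⟩
  simp [Pset]

lemma tmin_eq_inf' (n : ℕ) (hn : 2 ≤ n) (x : Fin n → ℝ) :
    tmin n x = (Pset n).inf' (Pne n hn) (fun p => x p.1 - x p.2) := by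
  rw [Finset.inf'_eq_csInf_image]
  unfold tmin
  congr 1
  ext d
  simp only [Set.mem_setOf_eq, Set.mem_image, Finset.mem_coe, Pset, Finset.mem_filter,
    Finset.mem_univ, true_and, Prod.exists]
  constructor
  · rintro ⟨k, k', h1, h2, rfl⟩; exact ⟨k, k', ⟨h1, h2⟩, rfl⟩
  · rintro ⟨k, k', ⟨h1, h2⟩, rfl⟩; exact ⟨k, k', h1, h2, rfl⟩

lemma tmin_shift (n : ℕ) (hn : 2 ≤ n) (x : Fin n → ℝ) (s : ℝ) :
    tmin n (fun i => x i + (-1 : ℝ) ^ (i.val + 1) * s) = tmin n x - 2 * s := by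
  rw [tmin_eq_inf' n hn, tmin_eq_inf' n hn]
  have key : ∀ p ∈ Pset n,
      (fun i => x i + (-1 : ℝ) ^ (i.val + 1) * s) p.1
        - (fun i => x i + (-1 : ℝ) ^ (i.val + 1) * s) p.2
      = (x p.1 - x p.2) - 2 * s := by
    rintro ⟨k, k'⟩ hp
    simp only [Pset, Finset.mem_filter] at hp
    obtain ⟨-, h1, h2⟩ := hp
    have e1 : (-1 : ℝ) ^ (k.val + 1) = -1 := Odd.neg_one_pow h1
    have e2 : (-1 : ℝ) ^ (k'.val + 1) = 1 := Even.neg_one_pow h2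
    simp only [e1, e2]; ring
  rw [Finset.inf'_congr (Pne n hn) rfl key]
  apply le_antisymm
  · obtain ⟨p, hp, hq⟩ := Finset.exists_mem_eq_inf' (Pne n hn) (fun p => x p.1 - x p.2)
    calc _ ≤ (x p.1 - x p.2) - 2 * s := Finset.inf'_le _ hp
    _ = _ := by rw [hq]
  · apply Finset.le_inf'
    intro p hp
    have := Finset.inf'_le (fun p : Fin n × Fin n => x p.1 - x p.2) hp
    linarith

lemma tmin_cont (n : ℕ) (hn : 2 ≤ n) : Continuous (tmin n) := by
  have : tmin n = fun x => (Pset n).inf' (Pne n hn) (fun p => x p.1 - x p.2) := by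
    funext x; exact tmin_eq_inf' n hn x
  rw [this]
  exact Continuous.finset_inf'_apply (Pne n hn)
    (fun p _ => (continuous_apply p.1).sub (continuous_apply p.2))


theorem stmt2 (n : ℕ) (hn : 2 ≤ n) :
    ∃ h : (Fin n → ℝ) ≃ₜ (↥(Lset n) × ℝ),
      (∀ x : Fin n → ℝ,
        ((h x).1 : Fin n → ℝ) =
          (fun i : Fin n => x i + (-1 : ℝ) ^ (i.val + 1) * (tmin n x / 2)) ∧
        (h x).2 = tmin n x / 2) ∧
      (∀ x : Fin n → ℝ, x ∈ Mset n ↔ (h x).2 < 0) ∧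
      (∀ x : Fin n → ℝ, x ∈ Sset n ↔ 0 < (h x).2) := by
  have memL : ∀ x : Fin n → ℝ,
      (fun i : Fin n => x i + (-1 : ℝ) ^ (i.val + 1) * (tmin n x / 2)) ∈ Lset n := by
    intro x
    show tmin n _ = 0
    rw [tmin_shift n hn x (tmin n x / 2)]
    ring
  refine ⟨{
    toFun := fun x => (⟨_, memL x⟩, tmin n x / 2)
    invFun := fun ys => fun i => (ys.1 : Fin n → ℝ) i - (-1 : ℝ) ^ (i.val + 1) * ys.2
    left_inv := by
      intro x
      funext i
      simp only
      ring
    right_inv := by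
      rintro ⟨⟨y, hy⟩, s⟩
      have h0 : tmin n y = 0 := hy
      have key : tmin n (fun i => y i - (-1 : ℝ) ^ (i.val + 1) * s) = 2 * s := by
        have := tmin_shift n hn y (-s)
        simp only [mul_neg, ← sub_eq_add_neg] at this
        rw [this, h0]; ring
      simp only
      refine Prod.ext (Subtype.ext ?_) ?_
      · funext i
        simp only [key]
        ring
      · simp only [key]; ring
    continuous_toFun := by
      apply Continuous.prodMk
      · apply Continuous.subtype_mk
        apply continuous_pi
        intro i
        exact (continuous_apply i).add (continuous_const.mul
          ((tmin_cont n hn).div_const 2))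
      · exact (tmin_cont n hn).div_const 2
    continuous_invFun := by
      apply continuous_pi
      intro i
      exact ((continuous_apply i).comp (continuous_subtype_val.comp continuous_fst)).sub
        (continuous_const.mul continuous_snd) }, ?_, ?_, ?_⟩
  · intro x; exact ⟨rfl, rfl⟩
  · intro x
    constructor
    · intro hx; simp only [Homeomorph.homeomorph_mk_coe, Equiv.coe_fn_mk]
      have : tmin n x < 0 := hx
      linarith
    · intro hx
      simp only [Homeomorph.homeomorph_mk_coe, Equiv.coe_fn_mk] at hx
      show tmin n x < 0; linarith
  · intro x
    constructor
    · intro hx; simp only [Homeomorph.homeomorph_mk_coe, Equiv.coe_fn_mk]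
      have : 0 < tmin n x := hx
      linarith
    · intro hx
      simp only [Homeomorph.homeomorph_mk_coe, Equiv.coe_fn_mk] at hx
      show 0 < tmin n x; linarith
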